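/- Let N ≥ 2, and let f : [0,∞) → ℝ be continuous with lim_{t→∞} f(t)/t = +∞. Let u ∈ C²(ℝ^N_+) satisfy -Δu ≥ f(u) and u ≥ 0 in ℝ^N_+. Then for every R > 0 there exists a constant C₁ = C₁(N, f, R) > 0 such that for every open ball B(z,2R) compactly contained in ℝ^N_+, ∫_{B(z,R)} u ≤ C₁. (Note: the bound is independent of the center z.) -/

import Mathlib

open Set Filter MeasureTheory

/-- The Laplacian of `u : ℝ^N → ℝ`, as the sum of the second partial derivatives. -/
noncomputable def lap {N : ℕ} (u : EuclideanSpace ℝ (Fin N) → ℝ)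
    (x : EuclideanSpace ℝ (Fin N)) : ℝ :=
  ∑ i, fderiv ℝ (fun y => fderiv ℝ u y (EuclideanSpace.single i 1)) x
    (EuclideanSpace.single i 1)

section helpers
open Real

lemma superlin {f : ℝ → ℝ} (hf : ContinuousOn f (Ici 0))
    (hsup : Tendsto (fun t : ℝ => f t / t) atTop atTop) (A : ℝ) (hA : 0 < A) :
    ∃ B : ℝ, 0 ≤ B ∧ ∀ t : ℝ, 0 ≤ t → A * t - B ≤ f t := by
  obtain ⟨T, hT⟩ := (hsup.eventually_ge_atTop A).exists_forall_of_atTop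
  set T' := max T 1 with hT'
  obtain ⟨M', hM'⟩ := (isCompact_Icc.bddBelow_image
    (hf.mono (fun x (hx : x ∈ Icc (0:ℝ) T') => hx.1)))
  have hM : ∀ t ∈ Icc (0:ℝ) T', M' ≤ f t := fun t ht => hM' (mem_image_of_mem f ht)
  refine ⟨max (-M' + A * T') 0, le_max_right _ _, fun t ht => ?_⟩
  have hkey : max (-M' + A * T') 0 ≥ -M' + A * T' := le_max_left _ _
  rcases le_or_gt t T' with h | h
  · have h2 := hM t ⟨ht, h⟩
    nlinarith [mul_le_mul_of_nonneg_left h hA.le]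
  · have h1 : (1:ℝ) ≤ t := le_trans (le_max_right T 1) h.le
    have h2 := hT t (le_trans (le_max_left T 1) h.le)
    have h0 : 0 < t := lt_of_lt_of_le one_pos h1
    have h3 : A * t ≤ f t := by
      have := (le_div_iff₀ h0).mp h2
      linarith
    have hk0 : (0:ℝ) ≤ max (-M' + A * T') 0 := le_max_right _ _
    nlinarith

variable {m : ℕ}

noncomputable def prj (j : Fin m) : (Fin m → ℝ) →L[ℝ] ℝ :=
  ContinuousLinearMap.proj j

noncomputable def psi (y : Fin m → ℝ) (L : ℝ) (j : Fin m) (x : Fin m → ℝ) : ℝ :=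
  Real.cos (π/(2*L) * (x j - y j))

noncomputable def phi (y : Fin m → ℝ) (L : ℝ) (x : Fin m → ℝ) : ℝ := ∏ j, psi y L j x

lemma hasFDerivAt_coord (y : Fin m → ℝ) (L : ℝ) (j : Fin m) (x : Fin m → ℝ) :
    HasFDerivAt (fun x : Fin m → ℝ => π/(2*L) * (x j - y j))
      ((π/(2*L)) • prj j) x :=
  (((prj j).hasFDerivAt).sub_const (y j)).const_mul _

lemma hasFDerivAt_psi (y : Fin m → ℝ) (L : ℝ) (j : Fin m) (x : Fin m → ℝ) :
    HasFDerivAt (psi y L j)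
      ((-Real.sin (π/(2*L) * (x j - y j))) • ((π/(2*L)) • prj j)) x :=
  (Real.hasDerivAt_cos _).comp_hasFDerivAt x (hasFDerivAt_coord y L j x)

lemma hasFDerivAt_sin' (y : Fin m → ℝ) (L : ℝ) (j : Fin m) (x : Fin m → ℝ) :
    HasFDerivAt (fun x : Fin m → ℝ => Real.sin (π/(2*L) * (x j - y j)))
      ((Real.cos (π/(2*L) * (x j - y j))) • ((π/(2*L)) • prj j)) x :=
  (Real.hasDerivAt_sin _).comp_hasFDerivAt x (hasFDerivAt_coord y L j x)

lemma hasFDerivAt_phi (y : Fin m → ℝ) (L : ℝ) (x : Fin m → ℝ) :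
    HasFDerivAt (phi y L)
      (∑ j, (∏ k ∈ Finset.univ.erase j, psi y L k x) •
        ((-Real.sin (π/(2*L) * (x j - y j))) • ((π/(2*L)) • prj j))) x := by
  have := HasFDerivAt.finset_prod (u := Finset.univ) (g := fun j => psi y L j)
    (fun j _ => hasFDerivAt_psi y L j x)
  exact this

lemma hasFDerivAt_P (y : Fin m → ℝ) (L : ℝ) (i : Fin m) (x : Fin m → ℝ) :
    HasFDerivAt (fun x => ∏ j ∈ Finset.univ.erase i, psi y L j x)
      (∑ j ∈ Finset.univ.erase i, (∏ k ∈ (Finset.univ.erase i).erase j, psi y L k x) •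
        ((-Real.sin (π/(2*L) * (x j - y j))) • ((π/(2*L)) • prj j))) x := by
  have := HasFDerivAt.finset_prod (u := Finset.univ.erase i) (g := fun j => psi y L j)
    (fun j _ => hasFDerivAt_psi y L j x)
  simpa using this

noncomputable def Fv (U : (Fin m → ℝ) → ℝ) (y : Fin m → ℝ) (L : ℝ) (i : Fin m)
    (x : Fin m → ℝ) : ℝ :=
  fderiv ℝ U x (Pi.single i 1) * phi y L x +
    π/(2*L) * (U x * Real.sin (π/(2*L) * (x i - y i)) * ∏ j ∈ Finset.univ.erase i, psi y L j x)

section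
variable {s : Set (Fin m → ℝ)} {U : (Fin m → ℝ) → ℝ} {x : Fin m → ℝ}

lemma hasFDerivAt_Fv (hs : IsOpen s) (hU : ContDiffOn ℝ 2 U s) (hx : x ∈ s)
    (y : Fin m → ℝ) (L : ℝ) (i : Fin m) :
    HasFDerivAt (Fv U y L i)
      ((fderiv ℝ U x (Pi.single i 1) •
            (∑ j, (∏ k ∈ Finset.univ.erase j, psi y L k x) •
              ((-Real.sin (π/(2*L) * (x j - y j))) • ((π/(2*L)) • prj j)))
         + phi y L x • fderiv ℝ (fun z => fderiv ℝ U z (Pi.single i 1)) x)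
       + (π/(2*L)) •
         ((U x * Real.sin (π/(2*L) * (x i - y i))) •
            (∑ j ∈ Finset.univ.erase i, (∏ k ∈ (Finset.univ.erase i).erase j, psi y L k x) •
              ((-Real.sin (π/(2*L) * (x j - y j))) • ((π/(2*L)) • prj j)))
          + (∏ j ∈ Finset.univ.erase i, psi y L j x) •
            (U x • ((Real.cos (π/(2*L) * (x i - y i))) • ((π/(2*L)) • prj i))
              + Real.sin (π/(2*L) * (x i - y i)) • fderiv ℝ U x))) x := by
  have hnhds := hs.mem_nhds hx
  have hUd : DifferentiableAt ℝ U x :=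
    (hU.differentiableOn (by norm_num)).differentiableAt hnhds
  have hDF : ContDiffOn ℝ 1 (fderiv ℝ U) s := hU.fderiv_of_isOpen hs (by norm_num)
  have hDFd : DifferentiableAt ℝ (fderiv ℝ U) x :=
    (hDF.differentiableOn (by norm_num)).differentiableAt hnhds
  have hgUd : DifferentiableAt ℝ (fun z => fderiv ℝ U z (Pi.single i 1)) x :=
    hDFd.clm_apply (differentiableAt_const _)
  exact (hgUd.hasFDerivAt.mul (hasFDerivAt_phi y L x)).add
    (((hUd.hasFDerivAt.mul (hasFDerivAt_sin' y L i x)).mul (hasFDerivAt_P y L i x)).const_mul _)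

end

section
variable {s : Set (Fin m → ℝ)} {U : (Fin m → ℝ) → ℝ} {x : Fin m → ℝ}

lemma div_eval (hs : IsOpen s) (hU : ContDiffOn ℝ 2 U s) (hx : x ∈ s) (y : Fin m → ℝ) (L : ℝ) :
    ∑ i, fderiv ℝ (Fv U y L i) x (Pi.single i 1)
      = (∑ i, fderiv ℝ (fun z => fderiv ℝ U z (Pi.single i 1)) x (Pi.single i 1)) * phi y L x
        + m * (π/(2*L))^2 * (U x * phi y L x) := by
  have hterm : ∀ i : Fin m, fderiv ℝ (Fv U y L i) x (Pi.single i 1)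
      = fderiv ℝ (fun z => fderiv ℝ U z (Pi.single i 1)) x (Pi.single i 1) * phi y L x
        + (π/(2*L))^2 * (U x * phi y L x) := by
    intro i
    rw [(hasFDerivAt_Fv hs hU hx y L i).fderiv]
    simp only [ContinuousLinearMap.add_apply, ContinuousLinearMap.smul_apply,
      ContinuousLinearMap.sum_apply, prj, ContinuousLinearMap.proj_apply, smul_eq_mul,
      Pi.single_apply, mul_ite, ite_mul, mul_zero, zero_mul, mul_one,
      Finset.sum_ite_eq', Finset.mem_univ, if_true, Finset.mem_erase, ne_eq,
      not_true_eq_false, false_and, if_false]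
    have hPphi : (∏ k ∈ Finset.univ.erase i, psi y L k x) * psi y L i x = phi y L x :=
      Finset.prod_erase_mul _ _ (Finset.mem_univ i)
    rw [← hPphi, psi]
    ring
  rw [Finset.sum_congr rfl fun i _ => hterm i, Finset.sum_add_distrib, ← Finset.sum_mul,
    Finset.sum_const, Finset.card_univ, Fintype.card_fin, nsmul_eq_mul]
  ring

end

lemma continuous_psi (y : Fin m → ℝ) (L : ℝ) (j : Fin m) : Continuous (psi y L j) :=
  Real.continuous_cos.comp (continuous_const.mul ((continuous_apply j).sub continuous_const))

lemma continuous_phi (y : Fin m → ℝ) (L : ℝ) : Continuous (phi y L) :=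
  continuous_finset_prod _ fun j _ => continuous_psi y L j

lemma psi_nonneg {L : ℝ} (hL : 0 < L) {y : Fin m → ℝ} (j : Fin m) {t : Fin m → ℝ}
    (ht : |t j - y j| ≤ L) : 0 ≤ psi y L j t := by
  have hκ : 0 < π/(2*L) := by positivity
  have h1 : |π/(2*L) * (t j - y j)| ≤ π/2 := by
    rw [abs_mul, abs_of_pos hκ]
    calc π/(2*L) * |t j - y j| ≤ π/(2*L) * L := by
          exact mul_le_mul_of_nonneg_left ht hκ.le
      _ = π/2 := by field_simp
  exact Real.cos_nonneg_of_mem_Icc (abs_le.mp h1)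

lemma psi_le_one (y : Fin m → ℝ) (L : ℝ) (j : Fin m) (t : Fin m → ℝ) : psi y L j t ≤ 1 :=
  Real.cos_le_one _

section
variable {s : Set (Fin (m+1) → ℝ)} {U : (Fin (m+1) → ℝ) → ℝ}

lemma cube_bound (hs : IsOpen s) (hU : ContDiffOn ℝ 2 U s)
    (hnn : ∀ x ∈ s, 0 ≤ U x)
    {B L : ℝ} (hB : 0 ≤ B) (hL : 0 < L)
    (y : Fin (m+1) → ℝ)
    (hsub : Icc (fun i => y i - L) (fun i => y i + L) ⊆ s)
    (hlow : ∀ x ∈ s,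
      (((m+1 : ℕ) : ℝ) * (π/(2*L))^2 + 1) * U x - B
        ≤ -∑ i, fderiv ℝ (fun z => fderiv ℝ U z (Pi.single i 1)) x (Pi.single i 1)) :
    ∫ x in Icc (fun i => y i - L) (fun i => y i + L), U x * phi y L x ≤ B * (2*L)^(m+1) := by
  set a : Fin (m+1) → ℝ := fun i => y i - L with ha
  set b : Fin (m+1) → ℝ := fun i => y i + L with hb
  have hab : a ≤ b := fun i => by simp [ha, hb]; linarith
  have hIccs : Icc a b ⊆ s := hsub
  have hmem : ∀ x ∈ Icc a b, ∀ j, |x j - y j| ≤ L := by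
    intro x hx j
    rw [abs_le]
    constructor
    · have := hx.1 j; simp only [ha] at this; linarith
    · have := hx.2 j; simp only [hb] at this; linarith
  -- continuity of second-derivative sum on s
  have hDF : ContDiffOn ℝ 1 (fderiv ℝ U) s := hU.fderiv_of_isOpen hs (by norm_num)
  have hgU1 : ∀ i : Fin (m+1), ContDiffOn ℝ 1 (fun z => fderiv ℝ U z (Pi.single i 1)) s :=
    fun i => hDF.clm_apply contDiffOn_const
  have hgUc : ∀ i : Fin (m+1), ContinuousOn (fun z => fderiv ℝ U z (Pi.single i 1)) s :=
    fun i => (hgU1 i).continuousOn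
  have hHc : ContinuousOn
      (fun x => ∑ i, fderiv ℝ (fun z => fderiv ℝ U z (Pi.single i 1)) x (Pi.single i 1)) s := by
    apply continuousOn_finset_sum
    intro i _
    exact (((hgU1 i).continuousOn_fderiv_of_isOpen hs (by norm_num)).clm_apply continuousOn_const)
  have hUc : ContinuousOn U s := hU.continuousOn
  have hphi_nn : ∀ x ∈ Icc a b, 0 ≤ phi y L x := fun x hx =>
    Finset.prod_nonneg fun j _ => psi_nonneg hL j (hmem x hx j)
  -- integrability
  have hint1 : IntegrableOn
      (fun x => (∑ i, fderiv ℝ (fun z => fderiv ℝ U z (Pi.single i 1)) x (Pi.single i 1))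
        * phi y L x) (Icc a b) :=
    ((hHc.mono hIccs).mul ((continuous_phi y L).continuousOn)).integrableOn_compact isCompact_Icc
  have hint2 : IntegrableOn (fun x => U x * phi y L x) (Icc a b) :=
    ((hUc.mono hIccs).mul ((continuous_phi y L).continuousOn)).integrableOn_compact isCompact_Icc
  have hint3 : IntegrableOn (phi y L) (Icc a b) :=
    (continuous_phi y L).continuousOn.integrableOn_compact isCompact_Icc
  -- Green/divergence step
  have hgreen : (0:ℝ) ≤ ∫ x in Icc a b,
      ((∑ i, fderiv ℝ (fun z => fderiv ℝ U z (Pi.single i 1)) x (Pi.single i 1)) * phi y L x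
        + ((m+1 : ℕ) : ℝ) * (π/(2*L))^2 * (U x * phi y L x)) := by
    classical
    have hdiv_eq : ∀ x ∈ Icc a b, ∑ i, fderiv ℝ (Fv U y L i) x (Pi.single i 1)
        = (∑ i, fderiv ℝ (fun z => fderiv ℝ U z (Pi.single i 1)) x (Pi.single i 1)) * phi y L x
          + ((m+1 : ℕ) : ℝ) * (π/(2*L))^2 * (U x * phi y L x) :=
      fun x hx => div_eval hs hU (hIccs hx) y L
    have Hc : ∀ i, ContinuousOn (Fv U y L i) (Icc a b) := by
      intro i
      apply ContinuousOn.add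
      · exact ((hgUc i).mono hIccs).mul (continuous_phi y L).continuousOn
      · exact continuousOn_const.mul (((hUc.mono hIccs).mul
          ((Real.continuous_sin.comp (continuous_const.mul
            ((continuous_apply i).sub continuous_const))).continuousOn)).mul
          ((continuous_finset_prod _ fun j _ => continuous_psi y L j).continuousOn))
    have Hd : ∀ x ∈ (Set.pi univ fun i => Ioo (a i) (b i)) \ (∅ : Set (Fin (m+1) → ℝ)),
        ∀ i, HasFDerivAt (Fv U y L i) (fderiv ℝ (Fv U y L i) x) x := by
      intro x hx i
      have hxIcc : x ∈ Icc a b :=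
        ⟨fun j => (hx.1 j (Set.mem_univ j)).1.le, fun j => (hx.1 j (Set.mem_univ j)).2.le⟩
      exact ((hasFDerivAt_Fv hs hU (hIccs hxIcc) y L i).differentiableAt).hasFDerivAt
    have Hi : IntegrableOn
        (fun x => ∑ i, fderiv ℝ (Fv U y L i) x (Pi.single i 1)) (Icc a b) :=
      MeasureTheory.IntegrableOn.congr_fun (hint1.add (hint2.const_mul _))
        (fun x hx => (hdiv_eq x hx).symm) measurableSet_Icc
    have key := MeasureTheory.integral_divergence_of_hasFDerivAt_off_countable' a b hab
      (fun i => Fv U y L i) (fun i x => fderiv ℝ (Fv U y L i) x) ∅ countable_empty Hc Hd Hi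
    have hκL : π/(2*L) * L = π/2 := by field_simp
    have hfaces : (0:ℝ) ≤ ∑ i : Fin (m+1),
        ((∫ x in Icc (a ∘ i.succAbove) (b ∘ i.succAbove), Fv U y L i (Fin.insertNth (α := fun _ => ℝ) i (b i) x))
          - ∫ x in Icc (a ∘ i.succAbove) (b ∘ i.succAbove), Fv U y L i (Fin.insertNth (α := fun _ => ℝ) i (a i) x)) := by
      apply Finset.sum_nonneg
      intro i _
      have hfront : (0:ℝ) ≤ ∫ x in Icc (a ∘ i.succAbove) (b ∘ i.succAbove),
          Fv U y L i (Fin.insertNth (α := fun _ => ℝ) i (b i) x) := by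
        apply setIntegral_nonneg measurableSet_Icc
        intro x hx
        have hp : Fin.insertNth (α := fun _ => ℝ) i (b i) x ∈ Icc a b :=
          Fin.insertNth_mem_Icc.mpr ⟨right_mem_Icc.mpr (hab i), hx⟩
        set p := Fin.insertNth (α := fun _ => ℝ) i (b i) x with hpdef
        have hpi : p i = b i := by simp [hpdef]
        have hθ : π/(2*L) * (p i - y i) = π/2 := by
          rw [hpi]; simp only [hb]; rw [show y i + L - y i = L by ring, hκL]
        have hphi0 : phi y L p = 0 :=
          Finset.prod_eq_zero (Finset.mem_univ i)
            (by rw [psi, hθ, Real.cos_pi_div_two])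
        rw [Fv, hphi0, mul_zero, zero_add, hθ, Real.sin_pi_div_two, mul_one]
        have hP : 0 ≤ ∏ j ∈ Finset.univ.erase i, psi y L j p :=
          Finset.prod_nonneg fun j _ => psi_nonneg hL j (hmem p hp j)
        have hκpos : (0:ℝ) < π/(2*L) := by positivity
        exact mul_nonneg hκpos.le (mul_nonneg (hnn p (hIccs hp)) hP)
      have hback : ∫ x in Icc (a ∘ i.succAbove) (b ∘ i.succAbove),
          Fv U y L i (Fin.insertNth (α := fun _ => ℝ) i (a i) x) ≤ 0 := by
        apply setIntegral_nonpos measurableSet_Icc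
        intro x hx
        have hp : Fin.insertNth (α := fun _ => ℝ) i (a i) x ∈ Icc a b :=
          Fin.insertNth_mem_Icc.mpr ⟨left_mem_Icc.mpr (hab i), hx⟩
        set p := Fin.insertNth (α := fun _ => ℝ) i (a i) x with hpdef
        have hpi : p i = a i := by simp [hpdef]
        have hθ : π/(2*L) * (p i - y i) = -(π/2) := by
          rw [hpi]; simp only [ha]; rw [show y i - L - y i = -L by ring]
          rw [mul_neg, hκL]
        have hphi0 : phi y L p = 0 :=
          Finset.prod_eq_zero (Finset.mem_univ i)
            (by rw [psi, hθ, Real.cos_neg, Real.cos_pi_div_two])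
        rw [Fv, hphi0, mul_zero, zero_add, hθ, Real.sin_neg, Real.sin_pi_div_two]
        have hP : 0 ≤ ∏ j ∈ Finset.univ.erase i, psi y L j p :=
          Finset.prod_nonneg fun j _ => psi_nonneg hL j (hmem p hp j)
        have hκpos : (0:ℝ) < π/(2*L) := by positivity
        have : U p * -1 * ∏ j ∈ Finset.univ.erase i, psi y L j p ≤ 0 := by
          have := mul_nonneg (hnn p (hIccs hp)) hP
          nlinarith
        exact mul_nonpos_of_nonneg_of_nonpos hκpos.le this
      linarith
    rw [← key] at hfaces
    rwa [setIntegral_congr_fun measurableSet_Icc hdiv_eq] at hfaces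
  -- split the Green inequality
  rw [integral_add hint1 (hint2.const_mul _)] at hgreen
  rw [MeasureTheory.integral_const_mul] at hgreen
  -- lower bound step, using hlow
  have hmono : ∫ x in Icc a b, ((((m+1 : ℕ) : ℝ) * (π/(2*L))^2 + 1) * U x - B) * phi y L x
      ≤ ∫ x in Icc a b,
        (-(∑ i, fderiv ℝ (fun z => fderiv ℝ U z (Pi.single i 1)) x (Pi.single i 1))) * phi y L x := by
    apply setIntegral_mono_on _ _ measurableSet_Icc
    · intro x hx
      exact mul_le_mul_of_nonneg_right (hlow x (hIccs hx)) (hphi_nn x hx)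
    · exact (((continuousOn_const.mul (hUc.mono hIccs)).sub continuousOn_const).mul
        (continuous_phi y L).continuousOn).integrableOn_compact isCompact_Icc
    · exact MeasureTheory.IntegrableOn.congr_fun hint1.neg
        (fun x _ => by simp only [Pi.neg_apply]; ring) measurableSet_Icc
  have hneg : ∫ x in Icc a b,
      (-(∑ i, fderiv ℝ (fun z => fderiv ℝ U z (Pi.single i 1)) x (Pi.single i 1))) * phi y L x
      = - ∫ x in Icc a b,
        (∑ i, fderiv ℝ (fun z => fderiv ℝ U z (Pi.single i 1)) x (Pi.single i 1)) * phi y L x := by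
    rw [← MeasureTheory.integral_neg]
    exact setIntegral_congr_fun measurableSet_Icc fun x _ => by ring
  have hexp : ∫ x in Icc a b, ((((m+1 : ℕ) : ℝ) * (π/(2*L))^2 + 1) * U x - B) * phi y L x
      = (((m+1 : ℕ) : ℝ) * (π/(2*L))^2 + 1) * (∫ x in Icc a b, U x * phi y L x)
        - B * ∫ x in Icc a b, phi y L x := by
    rw [← MeasureTheory.integral_const_mul, ← MeasureTheory.integral_const_mul,
      ← integral_sub (hint2.const_mul _) (hint3.const_mul _)]
    exact setIntegral_congr_fun measurableSet_Icc fun x _ => by ring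
  have hφle : ∫ x in Icc a b, phi y L x ≤ (2*L)^(m+1) := by
    have h1 : ∫ x in Icc a b, phi y L x ≤ ∫ _x in Icc a b, (1:ℝ) := by
      apply setIntegral_mono_on hint3
        (integrableOn_const (C := (1:ℝ)) isCompact_Icc.measure_lt_top.ne)
        measurableSet_Icc
      intro x hx
      exact Finset.prod_le_one (fun j _ => psi_nonneg hL j (hmem x hx j))
        (fun j _ => psi_le_one y L j x)
    rw [setIntegral_const, smul_eq_mul, mul_one, measureReal_def, Real.volume_Icc_pi_toReal hab] at h1
    calc ∫ x in Icc a b, phi y L x ≤ ∏ i, (b i - a i) := h1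
      _ = (2*L)^(m+1) := by
          rw [Finset.prod_congr rfl (fun i _ => show b i - a i = 2*L by simp [ha, hb]; ring),
            Finset.prod_const, Finset.card_univ, Fintype.card_fin]
  have hφnn : 0 ≤ ∫ x in Icc a b, phi y L x :=
    setIntegral_nonneg measurableSet_Icc hphi_nn
  have hI : ∫ x in Icc a b, U x * phi y L x ≤ B * ∫ x in Icc a b, phi y L x := by
    rw [hexp, hneg] at hmono
    linarith
  calc ∫ x in Icc a b, U x * phi y L x ≤ B * ∫ x in Icc a b, phi y L x := hI
    _ ≤ B * (2*L)^(m+1) := mul_le_mul_of_nonneg_left hφle hB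

end

section
variable {s : Set (Fin (m+1) → ℝ)} {U : (Fin (m+1) → ℝ) → ℝ}

lemma small_cube_bound (hs : IsOpen s) (hU : ContDiffOn ℝ 2 U s)
    (hnn : ∀ x ∈ s, 0 ≤ U x)
    {B L : ℝ} (hB : 0 ≤ B) (hL : 0 < L)
    (y : Fin (m+1) → ℝ)
    (hsub : Icc (fun i => y i - L) (fun i => y i + L) ⊆ s)
    (hlow : ∀ x ∈ s,
      (((m+1 : ℕ) : ℝ) * (π/(2*L))^2 + 1) * U x - B
        ≤ -∑ i, fderiv ℝ (fun z => fderiv ℝ U z (Pi.single i 1)) x (Pi.single i 1))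
    {T : Set (Fin (m+1) → ℝ)} (hT : MeasurableSet T)
    (hTsub : T ⊆ Icc (fun i => y i - L/2) (fun i => y i + L/2)) :
    ∫ x in T, U x ≤ ((Real.sqrt 2 / 2)^(m+1))⁻¹ * (B * (2*L)^(m+1)) := by
  have hc : (0:ℝ) < (Real.sqrt 2 / 2)^(m+1) := by positivity
  set c : ℝ := (Real.sqrt 2 / 2)^(m+1) with hcdef
  have hTQ : T ⊆ Icc (fun i => y i - L) (fun i => y i + L) := by
    intro x hx
    have h := hTsub hx
    exact ⟨fun j => by have := h.1 j; simp only at this ⊢; linarith,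
           fun j => by have := h.2 j; simp only at this ⊢; linarith⟩
  have hphi_lb : ∀ x ∈ T, c ≤ phi y L x := by
    intro x hx
    have h := hTsub hx
    have : ∀ j, Real.sqrt 2 / 2 ≤ psi y L j x := by
      intro j
      have hxj : |x j - y j| ≤ L/2 := by
        rw [abs_le]
        exact ⟨by have := h.1 j; simp only at this; linarith,
               by have := h.2 j; simp only at this; linarith⟩
      have hκ : 0 < π/(2*L) := by positivity
      have habs : |π/(2*L) * (x j - y j)| ≤ π/4 := by
        rw [abs_mul, abs_of_pos hκ]
        calc π/(2*L) * |x j - y j| ≤ π/(2*L) * (L/2) := mul_le_mul_of_nonneg_left hxj hκ.le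
          _ = π/4 := by field_simp; ring
      have h1 : Real.cos |π/(2*L) * (x j - y j)| ≥ Real.cos (π/4) := by
        apply Real.cos_le_cos_of_nonneg_of_le_pi (abs_nonneg _)
        · linarith [Real.pi_pos]
        · exact habs
      rw [Real.cos_abs] at h1
      rw [psi, ← Real.cos_pi_div_four]
      exact h1
    calc c = ∏ _j : Fin (m+1), (Real.sqrt 2 / 2) := by
          rw [Finset.prod_const, Finset.card_univ, Fintype.card_fin]
      _ ≤ ∏ j, psi y L j x := by
          apply Finset.prod_le_prod (fun j _ => by positivity) (fun j _ => this j)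
      _ = phi y L x := rfl
  have hUc : ContinuousOn U s := hU.continuousOn
  have hφc := continuous_phi y L
  have hintUφ : IntegrableOn (fun x => U x * phi y L x)
      (Icc (fun i => y i - L) (fun i => y i + L)) :=
    ((hUc.mono hsub).mul hφc.continuousOn).integrableOn_compact isCompact_Icc
  have hintU : IntegrableOn U T :=
    ((hUc.mono hsub).integrableOn_compact isCompact_Icc).mono_set hTQ
  have step1 : ∫ x in T, U x ≤ c⁻¹ * ∫ x in T, U x * phi y L x := by
    rw [← MeasureTheory.integral_const_mul]
    apply setIntegral_mono_on hintU
      ((hintUφ.mono_set hTQ).const_mul _) hT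
    intro x hx
    have hUx : 0 ≤ U x := hnn x (hsub (hTQ hx))
    have := hphi_lb x hx
    rw [← mul_le_mul_iff_right₀ hc]
    calc c * U x ≤ phi y L x * U x := mul_le_mul_of_nonneg_right this hUx
      _ = c * (c⁻¹ * (U x * phi y L x)) := by field_simp
  have step2 : ∫ x in T, U x * phi y L x
      ≤ ∫ x in Icc (fun i => y i - L) (fun i => y i + L), U x * phi y L x := by
    apply setIntegral_mono_set hintUφ
    · apply (ae_restrict_iff' measurableSet_Icc).mpr
      apply ae_of_all
      intro x hx
      have hmemj : ∀ j, |x j - y j| ≤ L := fun j => by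
        rw [abs_le]
        exact ⟨by have := hx.1 j; simp only at this; linarith,
               by have := hx.2 j; simp only at this; linarith⟩
      exact mul_nonneg (hnn x (hsub hx))
        (Finset.prod_nonneg fun j _ => psi_nonneg hL j (hmemj j))
    · exact HasSubset.Subset.eventuallyLE hTQ
  have step3 := cube_bound hs hU hnn hB hL y hsub hlow
  calc ∫ x in T, U x ≤ c⁻¹ * ∫ x in T, U x * phi y L x := step1
    _ ≤ c⁻¹ * (B * (2*L)^(m+1)) := by
        apply mul_le_mul_of_nonneg_left _ (by positivity)
        exact le_trans step2 step3
end

lemma coord_le_dist {n : ℕ} (v w : EuclideanSpace ℝ (Fin n)) (i : Fin n) :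
    |v i - w i| ≤ dist v w := by
  rw [EuclideanSpace.dist_eq]
  rw [show |v i - w i| = Real.sqrt ((v i - w i)^2) from (Real.sqrt_sq_eq_abs _).symm]
  apply Real.sqrt_le_sqrt
  rw [show (v i - w i)^2 = dist (v i) (w i)^2 by rw [Real.dist_eq, sq_abs]]
  exact Finset.single_le_sum (f := fun j => dist (v j) (w j)^2)
    (fun j _ => sq_nonneg _) (Finset.mem_univ i)

lemma dist_le_of_coords {n : ℕ} {v w : EuclideanSpace ℝ (Fin n)} {M : ℝ} (hM : 0 ≤ M)
    (h : ∀ i, |v i - w i| ≤ M) : dist v w ≤ Real.sqrt n * M := by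
  rw [EuclideanSpace.dist_eq]
  have : ∑ i, dist (v i) (w i)^2 ≤ (n : ℝ) * M^2 := by
    calc ∑ i, dist (v i) (w i)^2 ≤ ∑ _i : Fin n, M^2 := by
          apply Finset.sum_le_sum
          intro i _
          rw [Real.dist_eq]
          have := h i
          nlinarith [abs_nonneg (v i - w i)]
      _ = (n : ℝ) * M^2 := by rw [Finset.sum_const, Finset.card_univ, Fintype.card_fin,
            nsmul_eq_mul]
  calc Real.sqrt (∑ i, dist (v i) (w i)^2) ≤ Real.sqrt ((n:ℝ) * M^2) := Real.sqrt_le_sqrt this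
    _ = Real.sqrt n * M := by rw [Real.sqrt_mul (Nat.cast_nonneg n), Real.sqrt_sq hM]

lemma grid_pick {e r : ℝ} (he : 0 < e) (hr : 0 < r) {M : ℕ} (hM : r ≤ M * e) {t : ℝ}
    (ht0 : 0 ≤ t) (htr : t ≤ 2 * r) :
    ∃ j : ℕ, j < M ∧ |t - (2*j+1)*e| ≤ e := by
  have hM1 : 1 ≤ M := by
    rcases Nat.eq_zero_or_pos M with h | h
    · exfalso; rw [h] at hM; push_cast at hM; nlinarith
    · exact h
  have hpos : (0:ℝ) < 2*e := by linarith
  set j0 := ⌊t / (2*e)⌋₊ with hj0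
  by_cases hj : j0 < M
  · refine ⟨j0, hj, ?_⟩
    have h1 : (j0:ℝ) * (2*e) ≤ t := (le_div_iff₀ hpos).mp (Nat.floor_le (by positivity))
    have h2 : t < ((j0:ℝ) + 1) * (2*e) := (div_lt_iff₀ hpos).mp (Nat.lt_floor_add_one _)
    rw [abs_le]
    constructor <;> nlinarith
  · push_neg at hj
    refine ⟨M - 1, by omega, ?_⟩
    have h3 : (M:ℝ) * (2*e) ≤ t :=
      (le_div_iff₀ hpos).mp (le_trans (Nat.cast_le.mpr hj) (Nat.floor_le (by positivity)))
    have h4 : t ≤ (M:ℝ) * (2*e) := by nlinarith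
    have ht : t = (M:ℝ) * (2*e) := le_antisymm h4 h3
    rw [ht, Nat.cast_sub hM1, Nat.cast_one,
      show (M:ℝ)*(2*e) - (2*((M:ℝ)-1)+1)*e = e by ring, abs_of_nonneg he.le]

lemma setIntegral_biUnion_le {X : Type*} [MeasurableSpace X] {μ : Measure X} {ι : Type*}
    [DecidableEq ι] (t : Finset ι) (A : ι → Set X) (f : X → ℝ)
    (hmeas : ∀ k, MeasurableSet (A k)) (hint : ∀ k, IntegrableOn f (A k) μ)
    (hnn : ∀ k, ∀ x ∈ A k, 0 ≤ f x) :
    ∫ x in ⋃ k ∈ t, A k, f x ∂μ ≤ ∑ k ∈ t, ∫ x in A k, f x ∂μ := by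
  classical
  induction t using Finset.induction_on with
  | empty => simp
  | @insert a s ha ih =>
    rw [Finset.set_biUnion_insert, Finset.sum_insert ha]
    have hBmeas : MeasurableSet (⋃ k ∈ s, A k) :=
      MeasurableSet.biUnion s.countable_toSet (fun k _ => hmeas k)
    have hBint : IntegrableOn f (⋃ k ∈ s, A k) μ := by
      apply MeasureTheory.integrableOn_finset_iUnion.mpr
      intro k _
      exact hint k
    have hBnn : ∀ x ∈ ⋃ k ∈ s, A k, 0 ≤ f x := by
      intro x hx
      obtain ⟨k, _, hk⟩ := Set.mem_iUnion₂.mp hx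
      exact hnn k x hk
    have hsplit : A a ∪ ⋃ k ∈ s, A k = A a ∪ ((⋃ k ∈ s, A k) \ A a) :=
      (Set.union_diff_self).symm
    rw [hsplit, setIntegral_union disjoint_sdiff_self_right (hBmeas.diff (hmeas a))
      (hint a) (hBint.mono_set Set.diff_subset)]
    have hd : ∫ x in (⋃ k ∈ s, A k) \ A a, f x ∂μ ≤ ∫ x in ⋃ k ∈ s, A k, f x ∂μ := by
      apply setIntegral_mono_set hBint
      · exact (ae_restrict_iff' hBmeas).mpr (ae_of_all _ hBnn)
      · exact HasSubset.Subset.eventuallyLE Set.diff_subset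
    linarith [ih]


section main
variable {n : ℕ} (lst : Fin (n+1)) (u : EuclideanSpace ℝ (Fin (n+1)) → ℝ)

-- abbreviations
noncomputable def eL (n : ℕ) : EuclideanSpace ℝ (Fin (n+1)) ≃L[ℝ] (Fin (n+1) → ℝ) :=
  PiLp.continuousLinearEquiv 2 ℝ (fun _ : Fin (n+1) => ℝ)

lemma eL_apply (x : EuclideanSpace ℝ (Fin (n+1))) (i : Fin (n+1)) : eL n x i = x i := rfl
lemma eL_symm_apply (x : Fin (n+1) → ℝ) (i : Fin (n+1)) : (eL n).symm x i = x i := rfl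

lemma lap_transfer
    (hu : ContDiffOn ℝ 2 u {x : EuclideanSpace ℝ (Fin (n+1)) | 0 < x lst})
    (hsEopen : IsOpen {x : EuclideanSpace ℝ (Fin (n+1)) | 0 < x lst})
    {x : Fin (n+1) → ℝ} (hx : 0 < x lst) :
    (∑ i, fderiv ℝ (fun z => fderiv ℝ (fun w => u ((eL n).symm w)) z (Pi.single i 1)) x
      (Pi.single i 1)) = lap u ((eL n).symm x) := by
  set sE : Set (EuclideanSpace ℝ (Fin (n+1))) := {x | 0 < x lst} with hsE
  have hs'open : IsOpen {x : Fin (n+1) → ℝ | 0 < x lst} :=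
    isOpen_lt continuous_const (continuous_apply lst)
  have hmem : (eL n).symm x ∈ sE := hx
  have hDFE : ContDiffOn ℝ 1 (fderiv ℝ u) sE := hu.fderiv_of_isOpen hsEopen (by norm_num)
  have hsingle : ∀ i : Fin (n+1),
      ((eL n).symm : (Fin (n+1) → ℝ) →L[ℝ] EuclideanSpace ℝ (Fin (n+1))) (Pi.single i 1)
        = EuclideanSpace.single i 1 := fun i => rfl
  rw [lap]
  apply Finset.sum_congr rfl
  intro i _
  set gE : EuclideanSpace ℝ (Fin (n+1)) → ℝ :=
    fun v => fderiv ℝ u v (EuclideanSpace.single i 1) with hgE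
  have h1 : (fun z : Fin (n+1) → ℝ => fderiv ℝ (fun w => u ((eL n).symm w)) z (Pi.single i 1))
      =ᶠ[nhds x] (fun z => gE ((eL n).symm z)) := by
    filter_upwards [hs'open.mem_nhds hx] with w hw
    have hdu : DifferentiableAt ℝ u ((eL n).symm w) :=
      (hu.differentiableOn (by norm_num)).differentiableAt (hsEopen.mem_nhds hw)
    have hcomp : HasFDerivAt (fun w => u ((eL n).symm w))
        ((fderiv ℝ u ((eL n).symm w)).comp
          ((eL n).symm : (Fin (n+1) → ℝ) →L[ℝ] EuclideanSpace ℝ (Fin (n+1)))) w :=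
      HasFDerivAt.comp w hdu.hasFDerivAt
        (((eL n).symm : (Fin (n+1) → ℝ) →L[ℝ] EuclideanSpace ℝ (Fin (n+1))).hasFDerivAt)
    rw [hcomp.fderiv, ContinuousLinearMap.comp_apply, hsingle i]
  rw [h1.fderiv_eq]
  have hgEd : DifferentiableAt ℝ gE ((eL n).symm x) :=
    (((hDFE.clm_apply contDiffOn_const).differentiableOn (by norm_num)).differentiableAt
      (hsEopen.mem_nhds hmem))
  have hcomp2 : HasFDerivAt (fun z => gE ((eL n).symm z))
      ((fderiv ℝ gE ((eL n).symm x)).comp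
        ((eL n).symm : (Fin (n+1) → ℝ) →L[ℝ] EuclideanSpace ℝ (Fin (n+1)))) x :=
    HasFDerivAt.comp x hgEd.hasFDerivAt
      (((eL n).symm : (Fin (n+1) → ℝ) →L[ℝ] EuclideanSpace ℝ (Fin (n+1)))).hasFDerivAt
  rw [hcomp2.fderiv, ContinuousLinearMap.comp_apply, hsingle i]

end main

end helpers

set_option maxHeartbeats 2000000 in
open Real in
/-- If f is superlinear (f(t)/t → +∞), any nonnegative C² supersolution
of -Δu ≥ f(u) in the half-space satisfies, for every R > 0, a bound
∫_{B(z,R)} u ≤ C₁(N,f,R) uniform over all balls B(z,2R) ⊂⊂ ℝᴺ₊. -/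
theorem stmt11 (N : ℕ) (hN : 2 ≤ N) (lst : Fin N) (hlst : (lst : ℕ) = N - 1)
    (f : ℝ → ℝ) (hf : ContinuousOn f (Ici 0))
    (hsup : Tendsto (fun t : ℝ => f t / t) atTop atTop)
    (u : EuclideanSpace ℝ (Fin N) → ℝ)
    (hu : ContDiffOn ℝ 2 u {x : EuclideanSpace ℝ (Fin N) | 0 < x lst})
    (hnn : ∀ x : EuclideanSpace ℝ (Fin N), 0 < x lst → 0 ≤ u x)
    (hineq : ∀ x : EuclideanSpace ℝ (Fin N), 0 < x lst → f (u x) ≤ - lap u x) :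
    ∀ R > (0:ℝ), ∃ C₁ > (0:ℝ), ∀ z : EuclideanSpace ℝ (Fin N),
      Metric.closedBall z (2 * R) ⊆ {x : EuclideanSpace ℝ (Fin N) | 0 < x lst} →
      ∫ x in Metric.ball z R, u x ≤ C₁ := by
  obtain ⟨n, rfl⟩ : ∃ n, N = n + 1 := ⟨N - 1, by omega⟩
  intro R hR
  classical
  have hsEopen : IsOpen {x : EuclideanSpace ℝ (Fin (n+1)) | 0 < x lst} := by
    have hc : Continuous (fun x : EuclideanSpace ℝ (Fin (n+1)) => x lst) :=
      (continuous_apply lst).comp (eL n).continuous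
    exact isOpen_lt continuous_const hc
  set s' : Set (Fin (n+1) → ℝ) := {x | 0 < x lst} with hs'
  have hs'open : IsOpen s' := isOpen_lt continuous_const (continuous_apply lst)
  set U : (Fin (n+1) → ℝ) → ℝ := fun x => u ((eL n).symm x) with hUdef
  have hU' : ContDiffOn ℝ 2 U s' :=
    ContDiffOn.comp hu ((eL n).symm.contDiff.contDiffOn) (fun x hx => hx)
  have hnn' : ∀ x ∈ s', 0 ≤ U x := fun x hx => hnn _ hx
  have hsq : (0:ℝ) < Real.sqrt ((n+1:ℕ)) := Real.sqrt_pos.mpr (by positivity)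
  set L : ℝ := R / (2 * Real.sqrt ((n+1:ℕ))) with hLdef
  have hL : 0 < L := div_pos hR (by positivity)
  have hApos : (0:ℝ) < ((n+1:ℕ):ℝ) * (π/(2*L))^2 + 1 := by positivity
  obtain ⟨B, hB0, hBf⟩ := superlin hf hsup (((n+1:ℕ):ℝ) * (π/(2*L))^2 + 1) hApos
  have hlow : ∀ x ∈ s', (((n+1:ℕ):ℝ) * (π/(2*L))^2 + 1) * U x - B
      ≤ -∑ i, fderiv ℝ (fun z => fderiv ℝ U z (Pi.single i 1)) x (Pi.single i 1) := by
    intro x hx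
    have h1 := hBf (U x) (hnn' x hx)
    have h2 := hineq ((eL n).symm x) hx
    have h3 := lap_transfer lst u hu hsEopen (show 0 < x lst from hx)
    have h4 : (∑ i, fderiv ℝ (fun z => fderiv ℝ U z (Pi.single i 1)) x (Pi.single i 1))
        = lap u ((eL n).symm x) := h3
    rw [h4]
    have : f (U x) ≤ - lap u ((eL n).symm x) := h2
    linarith
  set c : ℝ := (Real.sqrt 2 / 2)^(n+1) with hc
  have hcpos : 0 < c := by positivity
  set C₀ : ℝ := c⁻¹ * (B * (2*L)^(n+1)) with hC₀
  have hC₀nn : 0 ≤ C₀ := by positivity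
  set δ : ℝ := L/2 with hδdef
  have hδ : 0 < δ := by positivity
  set m₀ : ℕ := ⌈R / δ⌉₊ with hm₀def
  have hm₀ : R ≤ (m₀:ℕ) * δ := by
    have h := Nat.le_ceil (R/δ)
    exact (div_le_iff₀ hδ).mp h
  refine ⟨(m₀:ℝ)^(n+1) * C₀ + 1, by positivity, ?_⟩
  intro z hz
  set Sz : Set (Fin (n+1) → ℝ) :=
    (MeasurableEquiv.toLp 2 (Fin (n+1) → ℝ)) ⁻¹' (Metric.ball z R) with hSzdef
  have hSmeas : MeasurableSet Sz :=
    (MeasurableEquiv.toLp 2 (Fin (n+1) → ℝ)).measurable measurableSet_ball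
  have hSint : ∫ x in Metric.ball z R, u x = ∫ x in Sz, U x := by
    rw [← MeasurePreserving.setIntegral_preimage_emb
      ((EuclideanSpace.volume_preserving_symm_measurableEquiv_toLp (Fin (n+1))).symm)
      (MeasurableEquiv.measurableEmbedding _) u (Metric.ball z R)]
    rfl
  have hSz_dist : ∀ x ∈ Sz, dist ((eL n).symm x) z < R := fun x hx => hx
  have hSz_coord : ∀ x ∈ Sz, ∀ i, |x i - z i| ≤ R := by
    intro x hx i
    have h1 := coord_le_dist ((eL n).symm x) z i
    have h2 := hSz_dist x hx
    have h3 : ((eL n).symm x) i = x i := rfl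
    rw [h3] at h1
    linarith
  have hSz_sub : ∀ x ∈ Sz, (eL n).symm x ∈ Metric.closedBall z (2*R) := by
    intro x hx
    have := hSz_dist x hx
    rw [Metric.mem_closedBall]
    linarith
  have hSz_s' : Sz ⊆ s' := fun x hx => hz (hSz_sub x hx)
  have hK : IsCompact ((eL n) '' (Metric.closedBall z (2*R))) :=
    (isCompact_closedBall z (2*R)).image (eL n).continuous
  have hKsub : (eL n) '' (Metric.closedBall z (2*R)) ⊆ s' := by
    rintro w ⟨v, hv, rfl⟩
    exact hz hv
  have hintU : IntegrableOn U Sz := by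
    apply IntegrableOn.mono_set (((hU'.continuousOn).mono hKsub).integrableOn_compact hK)
    intro x hx
    exact ⟨(eL n).symm x, hSz_sub x hx, rfl⟩
  set y : (Fin (n+1) → Fin m₀) → (Fin (n+1) → ℝ) :=
    fun k i => z i - R + (2*((k i : ℕ):ℝ)+1) * δ with hy
  have hcup : Sz = ⋃ k ∈ (Finset.univ : Finset (Fin (n+1) → Fin m₀)),
      (Sz ∩ Icc (fun i => y k i - δ) (fun i => y k i + δ)) := by
    apply Set.Subset.antisymm
    · intro x hx
      have hpick : ∀ i : Fin (n+1), ∃ j : ℕ, j < m₀ ∧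
          |(x i - (z i - R)) - (2*(j:ℝ)+1)*δ| ≤ δ := by
        intro i
        have h := hSz_coord x hx i
        rw [abs_le] at h
        exact grid_pick hδ hR hm₀ (by linarith [h.1]) (by linarith [h.2])
      choose j hj1 hj2 using hpick
      apply Set.mem_iUnion₂.mpr
      refine ⟨fun i => ⟨j i, hj1 i⟩, Finset.mem_univ _, hx, ?_, ?_⟩
      · intro i
        have h := hj2 i
        rw [abs_le] at h
        simp only [hy]
        push_cast
        linarith [h.1]
      · intro i
        have h := hj2 i
        rw [abs_le] at h
        simp only [hy]
        push_cast
        linarith [h.2]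
    · exact Set.iUnion₂_subset fun k _ => Set.inter_subset_left
  have hQk : ∀ k : Fin (n+1) → Fin m₀,
      ∫ x in Sz ∩ Icc (fun i => y k i - δ) (fun i => y k i + δ), U x ≤ C₀ := by
    intro k
    rcases Set.eq_empty_or_nonempty
      (Sz ∩ Icc (fun i => y k i - δ) (fun i => y k i + δ)) with hemp | ⟨x₀, hx₀S, hx₀Q⟩
    · rw [hemp, Measure.restrict_empty, integral_zero_measure]
      exact hC₀nn
    · have hsubQ : Icc (fun i => y k i - L) (fun i => y k i + L) ⊆ s' := by
        intro w hw
        have hwc : ∀ i, |w i - x₀ i| ≤ 3*L/2 := by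
          intro i
          have h1l := hw.1 i
          have h1u := hw.2 i
          simp only at h1l h1u
          have h2l := hx₀Q.1 i
          have h2u := hx₀Q.2 i
          simp only at h2l h2u
          rw [abs_le]
          constructor <;> [linarith [hδ]; linarith [hδ]]
        have hdist1 : dist ((eL n).symm w) ((eL n).symm x₀)
            ≤ Real.sqrt ((n+1:ℕ)) * (3*L/2) :=
          dist_le_of_coords (by positivity) (fun i => hwc i)
        have halg : Real.sqrt ((n+1:ℕ)) * (3*L/2) = 3*R/4 := by
          rw [hLdef]
          field_simp
          ring
        have hdist2 : dist ((eL n).symm x₀) z < R := hSz_dist x₀ hx₀S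
        have htot : dist ((eL n).symm w) z ≤ 2*R := by
          calc dist ((eL n).symm w) z
              ≤ dist ((eL n).symm w) ((eL n).symm x₀) + dist ((eL n).symm x₀) z :=
                dist_triangle _ _ _
            _ ≤ 3*R/4 + R := by rw [halg] at hdist1; linarith
            _ ≤ 2*R := by linarith
        exact hz (Metric.mem_closedBall.mpr htot)
      have hTsub : Sz ∩ Icc (fun i => y k i - δ) (fun i => y k i + δ)
          ⊆ Icc (fun i => y k i - L/2) (fun i => y k i + L/2) := by
        rw [← hδdef]
        exact Set.inter_subset_right
      have hres := small_cube_bound hs'open hU' hnn' hB0 hL (y k) hsubQ hlow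
        (hSmeas.inter measurableSet_Icc) hTsub
      rw [hC₀, hc]
      exact hres
  rw [hSint, hcup]
  have hstep := setIntegral_biUnion_le (μ := volume)
    (Finset.univ : Finset (Fin (n+1) → Fin m₀))
    (fun k => Sz ∩ Icc (fun i => y k i - δ) (fun i => y k i + δ)) U
    (fun k => hSmeas.inter measurableSet_Icc)
    (fun k => hintU.mono_set Set.inter_subset_left)
    (fun k x hx => hnn' x (hSz_s' hx.1))
  calc ∫ x in ⋃ k ∈ (Finset.univ : Finset (Fin (n+1) → Fin m₀)),
        (Sz ∩ Icc (fun i => y k i - δ) (fun i => y k i + δ)), U x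
      ≤ ∑ k : (Fin (n+1) → Fin m₀),
        ∫ x in Sz ∩ Icc (fun i => y k i - δ) (fun i => y k i + δ), U x := hstep
    _ ≤ ∑ _k : (Fin (n+1) → Fin m₀), C₀ := Finset.sum_le_sum fun k _ => hQk k
    _ = ((m₀:ℝ))^(n+1) * C₀ := by
        rw [Finset.sum_const, Finset.card_univ, Fintype.card_fun, Fintype.card_fin,
          Fintype.card_fin, nsmul_eq_mul]
        push_cast
        ring
    _ ≤ (m₀:ℝ)^(n+1) * C₀ + 1 := by linarith
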